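/- Let F = T[a..b] and F' = T[a'..b'] with a < a' be neighboring runs with equal period p and equal Lyndon roots, let ℓ, ℓ' be their Lyndon positions and δ = (ℓ' - ℓ) mod p. For any integer k ≥ 2 with a'-kp-δ > a and b+kp+δ < b', the fragment T[a'-kp-δ .. b+kp+δ] has smallest period exactly kp + δ. -/

import Mathlib

open List

variable {α : Type*}

/-- `frag T a b` is the fragment `T[a..b]` (inclusive, 0-based). -/
def frag (T : List α) (a b : ℕ) : List α := (T.drop a).take (b + 1 - a)

/-- `p` is a period of `S`: `0 < p ≤ |S|` and `S[i] = S[i+p]` for all valid `i`. -/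
def IsPeriodOf (p : ℕ) (S : List α) : Prop :=
  0 < p ∧ p ≤ S.length ∧ ∀ i : ℕ, i + p < S.length → S[i]? = S[i + p]?

/-- The smallest period of `S`. -/
noncomputable def minPeriod (S : List α) : ℕ := sInf {p | IsPeriodOf p S}

/-- `T[a..b]` is a run: periodic (its smallest period occurs at least twice)
and maximal on both sides. -/
def IsRun (T : List α) (a b : ℕ) : Prop :=
  a ≤ b ∧ b < T.length ∧
  2 * minPeriod (frag T a b) ≤ b + 1 - a ∧
  (a = 0 ∨ T[a - 1]? ≠ T[a - 1 + minPeriod (frag T a b)]?) ∧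
  (b = T.length - 1 ∨ T[b + 1]? ≠ T[b + 1 - minPeriod (frag T a b)]?)

/-- `W` occurs in `T` at position `s`. -/
def OccursAt (T : List α) (s : ℕ) (W : List α) : Prop :=
  s + W.length ≤ T.length ∧ (T.drop s).take W.length = W

/-- The set of distinct square substrings of `T`. -/
def Squares (T : List α) : Set (List α) :=
  {W | ∃ X : List α, X ≠ [] ∧ W = X ++ X ∧ W <:+: T}

/-- A non-empty string is primitive if it is not a proper power. -/
def Primitive (U : List α) : Prop :=
  U ≠ [] ∧ ∀ (V : List α) (k : ℕ), U = (List.replicate k V).flatten → k = 1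

/-- Cyclic rotation moving the first `c` characters to the end. -/
def rot (c : ℕ) (L : List α) : List α := L.drop c ++ L.take c

/-- `lam` is the Lyndon root of a periodic string `S`: the lexicographically
smallest rotation of `S[0..per(S))`. -/
def LyndonRootOf [LinearOrder α] (S lam : List α) : Prop :=
  (∃ c < minPeriod S, lam = rot c (S.take (minPeriod S))) ∧
  ∀ c < minPeriod S, lam ≤ rot c (S.take (minPeriod S))

/-- Squares generated by a periodic string `U`: squares contained in `U`
whose smallest period equals that of `U`. -/
def FragSquares (U : List α) : Set (List α) :=
  {W | ∃ X : List α, X ≠ [] ∧ W = X ++ X ∧ W <:+: U ∧ minPeriod W = minPeriod U}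

/-- `subper U`: the minimum of `per(X)` over squares `X²` generated by `U`. -/
noncomputable def subper (U : List α) : ℕ :=
  sInf {q | ∃ X : List α, X ≠ [] ∧ (X ++ X) <:+: U ∧
    minPeriod (X ++ X) = minPeriod U ∧ minPeriod X = q}

/-- Fragments `[a..b]` and `[a'..b']` are neighboring:
`[a-1..b+1] ∩ [a'..b'] ≠ ∅`. -/
def Neighboring (a b a' b' : ℕ) : Prop := a ≤ b' + 1 ∧ a' ≤ b + 1

/-- `T[x..y]` is a layer of the pyramid of the neighboring runs
`F = T[a..b]` and `F' = T[a'..b']` (with `a < a'`): a subperiodic run `R`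
with `subper(R) = per(F)` such that `R ∩ (F ∪ F')` is periodic with
period `per(R)`. -/
def IsLayer (T : List α) (a b a' b' x y : ℕ) : Prop :=
  IsRun T x y ∧
  4 * subper (frag T x y) ≤ minPeriod (frag T x y) ∧
  subper (frag T x y) = minPeriod (frag T a b) ∧
  2 * minPeriod (frag T x y) ≤ min y b' + 1 - max x a ∧
  IsPeriodOf (minPeriod (frag T x y)) (frag T (max x a) (min y b'))

/-- A `τ`-synchronizing set of `T` (Kempa–Kociumaka): consistency and density. -/
def SyncSet (T : List α) (τ : ℕ) (S : Set ℕ) : Prop :=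
  (∀ i ∈ S, i + 2 * τ ≤ T.length) ∧
  (∀ i j : ℕ, i + 2 * τ ≤ T.length → j + 2 * τ ≤ T.length →
    (T.drop i).take (2 * τ) = (T.drop j).take (2 * τ) → (i ∈ S ↔ j ∈ S)) ∧
  (∀ i : ℕ, i + 3 * τ - 1 ≤ T.length →
    ((∀ k ∈ S, k < i ∨ i + τ ≤ k) ↔
      3 * minPeriod ((T.drop i).take (3 * τ - 1)) ≤ τ))

namespace IFPAux

variable {α : Type*}

lemma get?_frag (T : List α) (x y i : ℕ) (h : i < y + 1 - x) :
    (frag T x y)[i]? = T[x + i]? := by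
  unfold frag
  rw [List.getElem?_take_of_lt h, List.getElem?_drop]

lemma frag_length (T : List α) {x y : ℕ} (hxy : x ≤ y) (hy : y < T.length) :
    (frag T x y).length = y + 1 - x := by
  unfold frag
  rw [List.length_take, List.length_drop]
  omega

lemma frag_ne_nil (T : List α) {x y : ℕ} (hxy : x ≤ y) (hy : y < T.length) :
    frag T x y ≠ [] := by
  have := frag_length T hxy hy
  intro h
  rw [h] at this
  simp at this
  omega

/-- `p` is a period of `T` on the (inclusive) index interval `[x, y]`. -/
def PeriodOn (T : List α) (x y p : ℕ) : Prop :=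
  ∀ i : ℕ, x ≤ i → i + p ≤ y → T[i]? = T[i + p]?

lemma isPeriodOf_frag_iff {T : List α} {x y p : ℕ} (hxy : x ≤ y) (hy : y < T.length) :
    IsPeriodOf p (frag T x y) ↔ 0 < p ∧ p ≤ y + 1 - x ∧ PeriodOn T x y p := by
  have hl := frag_length T hxy hy
  constructor
  · rintro ⟨h1, h2, h3⟩
    refine ⟨h1, by omega, ?_⟩
    intro i hxi hiy
    have h3' := h3 (i - x) (by omega)
    rwa [get?_frag T x y _ (by omega), get?_frag T x y _ (by omega),
      show x + (i - x) = i by omega, show x + (i - x + p) = i + p by omega] at h3'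
  · rintro ⟨h1, h2, h3⟩
    refine ⟨h1, by omega, ?_⟩
    intro i hi
    rw [hl] at hi
    rw [get?_frag T x y _ (by omega), get?_frag T x y _ (by omega)]
    have := h3 (x + i) (by omega) (by omega)
    rwa [show x + i + p = x + (i + p) by omega] at this

lemma isPeriodOf_length (S : List α) (h : S ≠ []) : IsPeriodOf S.length S :=
  ⟨List.length_pos_iff.2 h, le_rfl, fun i hi => absurd hi (by omega)⟩

lemma minPeriod_isPeriod (S : List α) (h : S ≠ []) : IsPeriodOf (minPeriod S) S := by
  have hne : Set.Nonempty {p | IsPeriodOf p S} := ⟨S.length, isPeriodOf_length S h⟩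
  exact Nat.sInf_mem hne

lemma minPeriod_le {S : List α} {q : ℕ} (h : IsPeriodOf q S) : minPeriod S ≤ q := by
  exact Nat.sInf_le h

lemma periodOn_chain {T : List α} {x y p : ℕ} (h : PeriodOn T x y p) :
    ∀ (m i : ℕ), x ≤ i → i + m * p ≤ y → T[i]? = T[i + m * p]? := by
  intro m
  induction m with
  | zero => simp
  | succ m ih =>
    intro i hxi hiy
    have hmul : (m + 1) * p = m * p + p := by ring
    have hm : i + m * p ≤ y := by omega
    have h1 := ih i hxi hm
    have h2 := h (i + m * p) (by omega) (by omega)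
    rw [h1, h2]
    congr 1
    omega

lemma periodOn_congr {T : List α} {x y p : ℕ} (h : PeriodOn T x y p) (hp : 0 < p)
    {i j : ℕ} (hxi : x ≤ i) (hxj : x ≤ j) (hiy : i ≤ y) (hjy : j ≤ y)
    (hmod : i % p = j % p) : T[i]? = T[j]? := by
  rcases le_total i j with hij | hij
  · have hd : p ∣ j - i := (Nat.modEq_iff_dvd' hij).1 hmod
    obtain ⟨m, hm⟩ := hd
    have hm' : j - i = m * p := by rw [hm, Nat.mul_comm]
    have hj : j = i + m * p := by omega
    rw [hj]
    exact periodOn_chain h m i hxi (by omega)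
  · have hd : p ∣ i - j := (Nat.modEq_iff_dvd' hij).1 hmod.symm
    obtain ⟨m, hm⟩ := hd
    have hm' : i - j = m * p := by rw [hm, Nat.mul_comm]
    have hi : i = j + m * p := by omega
    rw [hi]
    exact (periodOn_chain h m j hxj (by omega)).symm

/-- Weak Fine–Wilf on an interval, assuming `p ≤ q`. -/
lemma fineWilf_aux (T : List α) :
    ∀ q p x y : ℕ, 0 < p → p ≤ q → x + p + q ≤ y + 1 →
      PeriodOn T x y p → PeriodOn T x y q → PeriodOn T x y (Nat.gcd p q) := by
  intro q
  induction q using Nat.strong_induction_on with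
  | _ q ih =>
    intro p x y hp hpq hlen hP hQ
    rcases eq_or_lt_of_le hpq with heq | hlt
    · subst heq
      rwa [Nat.gcd_self]
    · -- p < q
      set r := q - p with hr
      have hr0 : 0 < r := by omega
      have hyp : p ≤ y := by omega
      -- r is a period on [x, y - p]
      have hR : PeriodOn T x (y - p) r := by
        intro i hxi hiy
        have h1 := hQ i hxi (by omega)
        have h2 := hP (i + r) (by omega) (by omega)
        rw [h1, h2]
        congr 1
        omega
      have hP' : PeriodOn T x (y - p) p := fun i hxi hiy => hP i hxi (by omega)
      have hg : PeriodOn T x (y - p) (Nat.gcd p r) := by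
        rcases le_total p r with hle | hle
        · exact ih r (by omega) p x (y - p) hp hle (by omega) hP' hR
        · have := ih p (by omega) r x (y - p) hr0 hle (by omega) hR hP'
          rwa [Nat.gcd_comm] at this
      have hgcd : Nat.gcd p r = Nat.gcd p q := by
        have : r = q - p := hr
        rw [this, Nat.gcd_sub_self_right hpq]
      rw [← hgcd]
      set g := Nat.gcd p r with hgdef
      have hg0 : 0 < g := Nat.gcd_pos_of_pos_left r hp
      have hgp : g ∣ p := Nat.gcd_dvd_left p r
      have hgr : g ∣ r := Nat.gcd_dvd_right p r
      have hgle : g ≤ r := Nat.le_of_dvd hr0 hgr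
      -- extend from [x, y-p] to [x, y]
      intro i hxi hiy
      rcases le_or_gt (i + g) (y - p) with hcase | hcase
      · exact hg i hxi hcase
      · have hip : x + p ≤ i := by
          have : g ≤ q - p := hgle
          omega
        have e1 := hP (i - p) (by omega) (by omega)
        have e2 := hP (i - p + g) (by omega) (by omega)
        have e3 := hg (i - p) (by omega) (by omega)
        rw [show i = i - p + p by omega, ← e1, e3, e2]
        congr 1
        omega

lemma fineWilf (T : List α) {q p x y : ℕ} (hp : 0 < p) (hq : 0 < q)
    (hlen : x + p + q ≤ y + 1) (hP : PeriodOn T x y p) (hQ : PeriodOn T x y q) :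
    PeriodOn T x y (Nat.gcd p q) := by
  rcases le_total p q with h | h
  · exact fineWilf_aux T q p x y hp h hlen hP hQ
  · rw [Nat.gcd_comm]
    exact fineWilf_aux T p q x y hq h (by omega) hQ hP

/-- Extend a period `d` valid on `[x, b]` leftwards to `[a, b]`, using a
period `p` (a multiple-friendly bound) on `[a, b]`. -/
lemma periodOn_extend_left {T : List α} {a b x d p : ℕ} (hd : 0 < d) (hdp : d ≤ p)
    (hax : a ≤ x) (hbound : x + p + d ≤ b + 1)
    (hPp : PeriodOn T a b p) (hPd : PeriodOn T x b d) : PeriodOn T a b d := by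
  have key : ∀ n i, x - i ≤ n → a ≤ i → i + d ≤ b → T[i]? = T[i + d]? := by
    intro n
    induction n with
    | zero =>
      intro i hni hai hib
      exact hPd i (by omega) hib
    | succ n ih =>
      intro i hni hai hib
      rcases le_or_gt x i with hxi | hxi
      · exact hPd i hxi hib
      · have e1 := hPp i hai (by omega)
        have e2 := hPp (i + d) (by omega) (by omega)
        have e3 := ih (i + p) (by omega) (by omega) (by omega)
        rw [e1, e3, show i + p + d = i + d + p by omega, ← e2]
  intro i hai hib
  exact key (x - i) i le_rfl hai hib

end IFPAux

open IFPAux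

/-- For neighboring equal-period runs with equal Lyndon roots, the fragment
`T[a'-kp-δ .. b+kp+δ]` (for `k ≥ 2`, when it lies strictly inside `(a..b')`)
has smallest period exactly `kp + δ`. -/
theorem induced_fragment_period [LinearOrder α] (T : List α)
    (a b a' b' p ℓ ℓ' δ k : ℕ) (lam : List α)
    (hab : a < a')
    (h1 : IsRun T a b) (h2 : IsRun T a' b')
    (hnb : Neighboring a b a' b')
    (hp1 : minPeriod (frag T a b) = p) (hp2 : minPeriod (frag T a' b') = p)
    (hlam1 : LyndonRootOf (frag T a b) lam)
    (hlam2 : LyndonRootOf (frag T a' b') lam)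
    (hℓ : a ≤ ℓ ∧ ℓ < a + p ∧ frag T ℓ (ℓ + p - 1) = lam)
    (hℓ' : a' ≤ ℓ' ∧ ℓ' < a' + p ∧ frag T ℓ' (ℓ' + p - 1) = lam)
    (hδ : δ < p ∧ (ℓ + δ) % p = ℓ' % p)
    (hk : 2 ≤ k)
    (hleft : a + (k * p + δ) < a')
    (hright : b + (k * p + δ) < b') :
    minPeriod (frag T (a' - (k * p + δ)) (b + (k * p + δ))) = k * p + δ := by
  set q := k * p + δ with hqdef
  obtain ⟨hab', hblen, hper1, hmaxl1, hmaxr1⟩ := h1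
  obtain ⟨ha'b', hb'len, hper2, hmaxl2, hmaxr2⟩ := h2
  rw [hp1] at hper1 hmaxr1
  rw [hp2] at hper2
  obtain ⟨haℓ, hℓp, hlam1'⟩ := hℓ
  obtain ⟨haℓ', hℓp', hlam2'⟩ := hℓ'
  obtain ⟨hδp, hδmod⟩ := hδ
  obtain ⟨hnb1, hnb2⟩ := hnb
  have hF := minPeriod_isPeriod (frag T a b) (frag_ne_nil T hab' hblen)
  rw [hp1] at hF
  obtain ⟨hp0, -, hFper⟩ := (isPeriodOf_frag_iff hab' hblen).1 hF
  have hF' := minPeriod_isPeriod (frag T a' b') (frag_ne_nil T ha'b' hb'len)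
  rw [hp2] at hF'
  obtain ⟨-, -, hF'per⟩ := (isPeriodOf_frag_iff ha'b' hb'len).1 hF'
  have h2p : 2 * p ≤ q := by
    have := Nat.mul_le_mul_right p hk
    omega
  have hq0 : 0 < q := by omega
  set x := a' - q with hxdef
  set y := b + q with hydef
  have hxa : a < x := by omega
  have hxq : x + q = a' := by omega
  have hylen : y < T.length := by omega
  have hxy : x ≤ y := by omega
  -- the two occurrences of the Lyndon root give matching letters
  have hlink : ∀ t, t < p → T[ℓ + t]? = T[ℓ' + t]? := by
    intro t ht
    have e1 := get?_frag T ℓ (ℓ + p - 1) t (by omega)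
    have e2 := get?_frag T ℓ' (ℓ' + p - 1) t (by omega)
    rw [hlam1'] at e1
    rw [hlam2'] at e2
    rw [← e1, ← e2]
  -- Step 1 : q is a period of T on [x, y]
  have hQ : PeriodOn T x y q := by
    intro i hxi hiy
    have hib : i ≤ b := by omega
    have hℓi : ℓ ≤ i + p := by omega
    set t := (i + p - ℓ) % p with htdef
    have htp : t < p := Nat.mod_lt _ hp0
    have e1 : T[i]? = T[ℓ + t]? := by
      apply periodOn_congr hFper hp0 (by omega) (by omega) hib (by omega)
      have m1 : (ℓ + t) % p = (ℓ + (i + p - ℓ)) % p :=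
        Nat.ModEq.add_left ℓ (Nat.mod_modEq (i + p - ℓ) p)
      rw [show ℓ + (i + p - ℓ) = i + p by omega] at m1
      rw [m1, Nat.add_mod_right]
    have e2 : T[ℓ + t]? = T[ℓ' + t]? := hlink t htp
    have e3 : T[ℓ' + t]? = T[i + q]? := by
      apply periodOn_congr hF'per hp0 (by omega) (by omega) (by omega) (by omega)
      have mA : Nat.ModEq p (ℓ + δ) ℓ' := hδmod
      have m1 : (ℓ' + t) % p = ((ℓ + δ) + (i + p - ℓ)) % p :=
        Nat.ModEq.add mA.symm (Nat.mod_modEq (i + p - ℓ) p)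
      rw [show (ℓ + δ) + (i + p - ℓ) = (i + δ) + p by omega] at m1
      rw [m1, Nat.add_mod_right, show i + q = (i + δ) + k * p by omega,
        Nat.add_mul_mod_self_right]
    exact e1.trans (e2.trans e3)
  have hUq : IsPeriodOf q (frag T x y) :=
    (isPeriodOf_frag_iff hxy hylen).2 ⟨hq0, by omega, hQ⟩
  have hUle : minPeriod (frag T x y) ≤ q := minPeriod_le hUq
  refine le_antisymm hUle ?_
  by_contra hlt
  push_neg at hlt
  set m := minPeriod (frag T x y) with hmdef
  have hUm : IsPeriodOf m (frag T x y) :=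
    minPeriod_isPeriod _ (frag_ne_nil T hxy hylen)
  obtain ⟨hm0, hmlen, hmP⟩ := (isPeriodOf_frag_iff hxy hylen).1 hUm
  -- Fine–Wilf on [x, y]
  have hgP : PeriodOn T x y (Nat.gcd m q) := fineWilf T hm0 hq0 (by omega) hmP hQ
  set g := Nat.gcd m q with hgdef
  have hg0 : 0 < g := Nat.gcd_pos_of_pos_right m hq0
  have hgq : g ∣ q := Nat.gcd_dvd_right m q
  have hgm : g ≤ m := Nat.le_of_dvd hm0 (Nat.gcd_dvd_left m q)
  have h2g : 2 * g ≤ q := by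
    obtain ⟨c, hc⟩ := hgq
    have hc2 : 2 ≤ c := by
      by_contra hcc
      push_neg at hcc
      interval_cases c
      · simp at hc; omega
      · simp at hc; omega
    calc 2 * g ≤ c * g := Nat.mul_le_mul_right g hc2
    _ = q := by rw [hc, Nat.mul_comm]
  -- Fine–Wilf on [x, b]
  have hPxb : PeriodOn T x b p := fun i hi hib => hFper i (by omega) hib
  have hGxb : PeriodOn T x b g := fun i hi hib => hgP i hi (by omega)
  have hdP : PeriodOn T x b (Nat.gcd p g) := fineWilf T hp0 hg0 (by omega) hPxb hGxb
  set d := Nat.gcd p g with hddef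
  have hd0 : 0 < d := Nat.gcd_pos_of_pos_left g hp0
  have hdlep : d ≤ p := Nat.le_of_dvd hp0 (Nat.gcd_dvd_left p g)
  rcases eq_or_lt_of_le hdlep with hdeq | hdlt
  · -- d = p : contradiction with right-maximality of F
    have hpg : p ∣ g := hdeq ▸ Nat.gcd_dvd_right p g
    obtain ⟨s, hs⟩ := hpg
    have hpleg : p ≤ g := Nat.le_of_dvd hg0 ⟨s, hs⟩
    have hbne : b ≠ T.length - 1 := by omega
    have hmax : T[b + 1]? ≠ T[b + 1 - p]? := hmaxr1.resolve_left hbne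
    apply hmax
    have e1 : T[b + 1 - g]? = T[b + 1]? := by
      have h := hgP (b + 1 - g) (by omega) (by omega)
      rwa [show b + 1 - g + g = b + 1 by omega] at h
    have hsp : (s - 1) * p = g - p := by
      rw [Nat.sub_mul, one_mul, Nat.mul_comm, ← hs]
    have e2 : T[b + 1 - g]? = T[b + 1 - p]? := by
      have h := periodOn_chain hFper (s - 1) (b + 1 - g) (by omega) (by omega)
      rwa [show b + 1 - g + (s - 1) * p = b + 1 - p by omega] at h
    exact e1.symm.trans e2
  · -- d < p : contradiction with minimality of p on F
    have hDab : PeriodOn T a b d :=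
      periodOn_extend_left hd0 hdlep (le_of_lt hxa) (by omega) hFper hdP
    have hIsd : IsPeriodOf d (frag T a b) :=
      (isPeriodOf_frag_iff hab' hblen).2 ⟨hd0, by omega, hDab⟩
    have := minPeriod_le hIsd
    rw [hp1] at this
    omega
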